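/- Let (eⱼ) be a basic sequence in an infinite-dimensional Banach space X and let (εⱼ) be a sequence of positive reals converging to 0. Then there exists a normalized block basic sequence (xⱼ) of (eⱼ) whose canonical basis projections Pⱼ on the closed span of (xⱼ) satisfy ‖Pⱼ‖ ≤ 1 + εⱼ for all j. -/

import Mathlib

open Finset

section aux
variable {X : Type*} [NormedAddCommGroup X] [NormedSpace ℝ X]

/-- basic sequences are linearly independent -/
lemma basicSeq_linearIndependent (e : ℕ → X) (hne : ∀ j, e j ≠ 0)
    (K : ℝ) (hK : ∀ (a : ℕ → ℝ) (m n : ℕ), m ≤ n →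
      ‖∑ j ∈ Finset.range m, a j • e j‖ ≤ K * ‖∑ j ∈ Finset.range n, a j • e j‖) :
    LinearIndependent ℝ e := by
  rw [linearIndependent_iff']
  intro s g hsum i his
  classical
  set a : ℕ → ℝ := fun j => if j ∈ s then g j else 0 with ha
  obtain ⟨n, hn⟩ : ∃ n, ∀ j ∈ s, j < n := ⟨s.sup id + 1, fun j hj =>
    Nat.lt_succ_of_le (Finset.le_sup (f := id) hj)⟩
  have hsub : s ⊆ Finset.range n := fun j hj => Finset.mem_range.2 (hn j hj)
  have hsum' : ∑ j ∈ Finset.range n, a j • e j = 0 := by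
    rw [← Finset.sum_subset hsub (fun j _ hj => by simp [a, hj])]
    rw [← hsum]
    exact Finset.sum_congr rfl fun j hj => by simp [a, hj]
  -- all partial sums vanish
  have hps : ∀ m, m ≤ n → ∑ j ∈ Finset.range m, a j • e j = 0 := by
    intro m hm
    have := hK a m n hm
    rw [hsum', norm_zero, mul_zero] at this
    exact norm_eq_zero.1 (le_antisymm this (norm_nonneg _))
  have hzero : ∀ j, j < n → a j = 0 := by
    intro j hj
    have h1 := hps j hj.le
    have h2 := hps (j + 1) hj
    rw [Finset.sum_range_succ, h1, zero_add] at h2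
    rcases smul_eq_zero.1 h2 with h | h
    · exact h
    · exact absurd h (hne j)
  have := hzero i (hn i his)
  simpa [a, his] using this

end aux

section mazur
variable {X : Type*} [NormedAddCommGroup X] [NormedSpace ℝ X] [CompleteSpace X]

lemma mazur_step (e : ℕ → X) (he : LinearIndependent ℝ e) (s : Set X) (hsfin : s.Finite)
    {δ : ℝ} (hδ : 0 < δ) (m : ℕ) :
    ∃ m' : ℕ, m < m' ∧ ∃ a : ℕ → ℝ,
      ‖∑ i ∈ Finset.Ico m m', a i • e i‖ = 1 ∧
      ∀ f ∈ Submodule.span ℝ s, ∀ t : ℝ,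
        ‖f‖ ≤ (1 + δ) * ‖f + t • ∑ i ∈ Finset.Ico m m', a i • e i‖ := by
  classical
  set F : Submodule ℝ X := Submodule.span ℝ s with hF
  haveI : FiniteDimensional ℝ F := FiniteDimensional.span_of_finite ℝ hsfin
  -- the unit sphere of F, as a subset of X
  set S : Set X := Subtype.val '' (Metric.sphere (0 : F) 1) with hS
  have hScompact : IsCompact S := (isCompact_sphere (0 : F) 1).image continuous_subtype_val
  have hSnorm : ∀ f ∈ S, ‖f‖ = 1 ∧ f ∈ F := by
    rintro f ⟨z, hz, rfl⟩
    refine ⟨?_, z.2⟩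
    have : dist z 0 = 1 := Metric.mem_sphere.1 hz
    simpa [dist_eq_norm] using this
  -- δ-net
  set r : ℝ := δ / (1 + δ) with hr
  have h1δ : (0:ℝ) < 1 + δ := by linarith
  have hr0 : 0 < r := div_pos hδ h1δ
  obtain ⟨t, hts, htfin, htcov⟩ := (totallyBounded_iff_subset.1 hScompact.totallyBounded)
    _ (Metric.dist_mem_uniformity hr0)
  -- dual functionals
  set φ : X → (X →L[ℝ] ℝ) := fun f =>
    if h : f ≠ 0 then (exists_dual_vector ℝ f (norm_ne_zero_iff.2 h)).choose else 0 with hφdef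
  have hφ : ∀ f ∈ t, ‖φ f‖ = 1 ∧ φ f f = 1 := by
    intro f hf
    have hf1 := (hSnorm f (hts hf)).1
    have hfne : f ≠ 0 := by
      intro h; rw [h, norm_zero] at hf1; norm_num at hf1
    have := (exists_dual_vector ℝ f (norm_ne_zero_iff.2 hfne)).choose_spec
    rw [hφdef]; simp only [dif_pos hfne]
    refine ⟨this.1, ?_⟩
    rw [this.2, hf1]
    norm_num
  set T : Finset X := htfin.toFinset with hT
  set k : ℕ := T.card with hk
  -- find y₀ in span of e_m, ..., e_{m+k} killed by all φ f, f ∈ T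
  set v : Fin (k+1) → ({f // f ∈ T} → ℝ) := fun i => fun f => φ f.1 (e (m + i)) with hv
  have hnli : ¬ LinearIndependent ℝ v := by
    intro h
    have := h.fintype_card_le_finrank
    rw [Module.finrank_fintype_fun_eq_card] at this
    simp [Fintype.card_coe, ← hk] at this
  obtain ⟨g, hgsum, i₀, hgne⟩ := Fintype.not_linearIndependent_iff.1 hnli
  set g' : ℕ → ℝ := fun i => if h : i < k + 1 then g ⟨i, h⟩ else 0 with hg'
  set y₀ : X := ∑ i ∈ Finset.range (k+1), g' i • e (m + i) with hy₀
  have hy₀fin : y₀ = ∑ i : Fin (k+1), g i • e (m + i) := by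
    rw [hy₀, ← Fin.sum_univ_eq_sum_range (fun i => g' i • e (m + i)) (k+1)]
    exact Finset.sum_congr rfl fun i _ => by have := i.isLt; simp [hg', i.isLt]; intro h; omega
  have hy₀ne : y₀ ≠ 0 := by
    intro h
    have hli : LinearIndependent ℝ (fun i : Fin (k+1) => e (m + i)) :=
      he.comp (fun i : Fin (k+1) => m + (i : ℕ)) (fun a b hab => Fin.ext (Nat.add_left_cancel hab))
    have := Fintype.linearIndependent_iff.1 hli g (by rw [← hy₀fin]; exact h)
    exact hgne (this i₀)
  have hy₀norm : 0 < ‖y₀‖ := norm_pos_iff.2 hy₀ne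
  have hφy₀ : ∀ f ∈ T, φ f y₀ = 0 := by
    intro f hf
    rw [hy₀fin, map_sum]
    have : ∀ i : Fin (k+1), φ f (g i • e (m + i)) = g i • v i ⟨f, hf⟩ := by
      intro i; rw [map_smul]
    rw [Finset.sum_congr rfl fun i _ => this i]
    calc ∑ i : Fin (k+1), g i • v i ⟨f, hf⟩ = (∑ i : Fin (k+1), g i • v i) ⟨f, hf⟩ := by
          simp [Finset.sum_apply]
      _ = 0 := by rw [hgsum]; rfl
  -- the normalized block vector
  set m' : ℕ := m + (k + 1) with hm'
  set a : ℕ → ℝ := fun i => if m ≤ i then ‖y₀‖⁻¹ * g' (i - m) else 0 with ha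
  have hblock : ∑ i ∈ Finset.Ico m m', a i • e i = ‖y₀‖⁻¹ • y₀ := by
    rw [Finset.sum_Ico_eq_sum_range]
    have : m' - m = k + 1 := by omega
    rw [this, hy₀, Finset.smul_sum]
    refine Finset.sum_congr rfl fun i _ => ?_
    simp [ha, smul_smul]; rfl
  set y : X := ∑ i ∈ Finset.Ico m m', a i • e i with hy
  have hynorm : ‖y‖ = 1 := by
    rw [hblock, norm_smul, norm_inv, norm_norm, inv_mul_cancel₀ (ne_of_gt hy₀norm)]
  have hφy : ∀ f ∈ T, φ f y = 0 := by
    intro f hf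
    rw [hblock, map_smul, hφy₀ f hf, smul_zero]
  refine ⟨m', by omega, a, hynorm, ?_⟩
  -- the key inequality
  intro f hf τ
  by_cases hf0 : f = 0
  · subst hf0; simp; positivity
  · have hfnorm : 0 < ‖f‖ := norm_pos_iff.2 hf0
    set u : X := ‖f‖⁻¹ • f with hu
    have huS : u ∈ S := by
      refine ⟨⟨u, F.smul_mem _ hf⟩, ?_, rfl⟩
      rw [Metric.mem_sphere]
      have : ‖u‖ = 1 := by
        rw [hu, norm_smul, norm_inv, norm_norm, inv_mul_cancel₀ (ne_of_gt hfnorm)]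
      show dist (⟨u, _⟩ : F) 0 = 1
      rw [dist_eq_norm, sub_zero]
      exact this
    obtain ⟨f₀, hf₀t, hf₀near⟩ : ∃ f₀ ∈ t, dist u f₀ < r := by
      have := htcov huS
      simpa using this
    have hf₀T : f₀ ∈ T := by rw [hT]; simpa using hf₀t
    obtain ⟨hφ₀norm, hφ₀val⟩ := hφ f₀ hf₀t
    -- lower bound: for any scalar c, ‖u + c • y‖ ≥ 1 - r
    have hlow : ∀ c : ℝ, 1 - r ≤ ‖u + c • y‖ := by
      intro c
      have h1 : φ f₀ (u + c • y) = φ f₀ u := by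
        have := hφy f₀ hf₀T
        rw [map_add, map_smul (φ f₀) c y, this, smul_zero, add_zero]
      have h2 : 1 - r ≤ φ f₀ u := by
        have : φ f₀ u = 1 + φ f₀ (u - f₀) := by
          rw [map_sub, hφ₀val]; ring
        rw [this]
        have habs : |φ f₀ (u - f₀)| ≤ ‖u - f₀‖ := by
          calc |φ f₀ (u - f₀)| ≤ ‖φ f₀‖ * ‖u - f₀‖ := (φ f₀).le_opNorm _
            _ = ‖u - f₀‖ := by rw [hφ₀norm, one_mul]
        have : ‖u - f₀‖ < r := by rwa [← dist_eq_norm]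
        have := neg_le_of_abs_le habs
        linarith
      calc 1 - r ≤ φ f₀ u := h2
        _ = φ f₀ (u + c • y) := h1.symm
        _ ≤ |φ f₀ (u + c • y)| := le_abs_self _
        _ ≤ ‖φ f₀‖ * ‖u + c • y‖ := (φ f₀).le_opNorm _
        _ = ‖u + c • y‖ := by rw [hφ₀norm, one_mul]
    have hsplit : f + τ • y = ‖f‖ • (u + (‖f‖⁻¹ * τ) • y) := by
      have h3 : ‖f‖ • u = f := by
        rw [hu, smul_smul, mul_inv_cancel₀ (ne_of_gt hfnorm), one_smul]
      have hτ : ‖f‖ * (‖f‖⁻¹ * τ) = τ := by field_simp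
      rw [smul_add, h3, smul_smul, hτ]
    have hlb : ‖f‖ * (1 - r) ≤ ‖f + τ • y‖ := by
      rw [hsplit, norm_smul, norm_norm]
      exact mul_le_mul_of_nonneg_left (hlow _) (norm_nonneg f)
    have hr1 : (1 + δ) * (1 - r) = 1 := by
      rw [hr]; field_simp; ring
    calc ‖f‖ = (1 + δ) * ((1 - r) * ‖f‖) := by rw [← mul_assoc, hr1, one_mul]
      _ ≤ (1 + δ) * ‖f + τ • y‖ := by
          apply mul_le_mul_of_nonneg_left _ (le_of_lt h1δ)
          rw [mul_comm]; exact hlb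

end mazur

section build
variable {X : Type*} [NormedAddCommGroup X] [NormedSpace ℝ X] [CompleteSpace X]
variable (e : ℕ → X) (he : LinearIndependent ℝ e) (δ : ℕ → ℝ) (hδ : ∀ j, 0 < δ j)

noncomputable def bstate : ℕ → ℕ × List X :=
  fun j => Nat.rec ((0 : ℕ), ([] : List X))
    (fun j st =>
      let h := mazur_step e he {x | x ∈ st.2} st.2.finite_toSet (hδ j) st.1
      (h.choose, st.2 ++ [∑ i ∈ Finset.Ico st.1 h.choose, h.choose_spec.2.choose i • e i])) j

noncomputable def bm (j : ℕ) : ℕ := (bstate e he δ hδ j).1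

noncomputable def ba (j : ℕ) : ℕ → ℝ :=
  (mazur_step e he {x | x ∈ (bstate e he δ hδ j).2} (bstate e he δ hδ j).2.finite_toSet
    (hδ j) (bstate e he δ hδ j).1).choose_spec.2.choose

noncomputable def bx (j : ℕ) : X :=
  ∑ i ∈ Finset.Ico (bm e he δ hδ j) (bm e he δ hδ (j+1)), ba e he δ hδ j i • e i

lemma bm_zero : bm e he δ hδ 0 = 0 := rfl

lemma bm_succ (j : ℕ) : bm e he δ hδ (j+1) =
    (mazur_step e he {x | x ∈ (bstate e he δ hδ j).2} (bstate e he δ hδ j).2.finite_toSet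
      (hδ j) (bstate e he δ hδ j).1).choose := rfl

lemma bstate_snd_succ (j : ℕ) :
    (bstate e he δ hδ (j+1)).2 = (bstate e he δ hδ j).2 ++ [bx e he δ hδ j] := rfl

lemma bx_spec (j : ℕ) : bm e he δ hδ j < bm e he δ hδ (j+1) ∧ ‖bx e he δ hδ j‖ = 1 ∧
    ∀ f ∈ Submodule.span ℝ {x | x ∈ (bstate e he δ hδ j).2}, ∀ t : ℝ,
      ‖f‖ ≤ (1 + δ j) * ‖f + t • bx e he δ hδ j‖ := by
  have h := (mazur_step e he {x | x ∈ (bstate e he δ hδ j).2} (bstate e he δ hδ j).2.finite_toSet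
    (hδ j) (bstate e he δ hδ j).1).choose_spec
  exact ⟨h.1, h.2.choose_spec.1, h.2.choose_spec.2⟩

lemma bstate_snd_eq (j : ℕ) :
    (bstate e he δ hδ j).2 = (List.range j).map (bx e he δ hδ) := by
  induction j with
  | zero => rfl
  | succ j ih =>
    rw [bstate_snd_succ, ih, List.range_succ, List.map_append]
    simp

end build

lemma geom_tail_eq (j : ℕ) : ∀ n, j ≤ n →
    ∑ i ∈ Finset.Ico j n, ((1:ℝ)/2)^(i+2) = (1/2)^(j+1) - (1/2)^(n+1) := by
  intro n hn
  induction n, hn using Nat.le_induction with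
  | base => simp
  | succ n hn ih => rw [Finset.sum_Ico_succ_top hn, ih]; ring

lemma geom_tail_le (j n : ℕ) : ∑ i ∈ Finset.Ico j n, ((1:ℝ)/2)^(i+2) ≤ (1/2)^(j+1) := by
  rcases le_or_gt j n with h | h
  · rw [geom_tail_eq j n h]
    have : (0:ℝ) < (1/2)^(n+1) := by positivity
    linarith
  · rw [Finset.Ico_eq_empty (by omega)]
    simp

lemma prod_one_add_le (δ : ℕ → ℝ) (hδ0 : ∀ i, 0 ≤ δ i) (j : ℕ) :
    ∀ n, ∑ i ∈ Finset.Ico j n, δ i ≤ 1/2 →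
      ∏ i ∈ Finset.Ico j n, (1 + δ i) ≤ 1 + 2 * ∑ i ∈ Finset.Ico j n, δ i := by
  intro n
  induction n with
  | zero => simp
  | succ n ih =>
    intro hsum
    by_cases hjn : j ≤ n
    · rw [Finset.prod_Ico_succ_top hjn, Finset.sum_Ico_succ_top hjn] at *
      have hs0 : 0 ≤ ∑ i ∈ Finset.Ico j n, δ i :=
        Finset.sum_nonneg fun i _ => hδ0 i
      have h1 : ∑ i ∈ Finset.Ico j n, δ i ≤ 1/2 := by
        have := hδ0 n; linarith
      have h2 := ih h1
      nlinarith [hδ0 n]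
    · rw [Finset.Ico_eq_empty (show ¬ j < n + 1 by omega)]
      simp




/-- A sequence is a basic sequence: all terms are nonzero and it satisfies
Grunblum's criterion (uniformly bounded basis projections on its span). -/
def IsBasicSeq {X : Type*} [NormedAddCommGroup X] [NormedSpace ℝ X]
    (e : ℕ → X) : Prop :=
  (∀ j, e j ≠ 0) ∧ ∃ K : ℝ, ∀ (a : ℕ → ℝ) (m n : ℕ), m ≤ n →
    ‖∑ j ∈ Finset.range m, a j • e j‖ ≤ K * ‖∑ j ∈ Finset.range n, a j • e j‖

theorem stmt_12 {X : Type*} [NormedAddCommGroup X] [NormedSpace ℝ X]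
    [CompleteSpace X] (hX : ¬FiniteDimensional ℝ X)
    (e : ℕ → X) (hbasic : IsBasicSeq e)
    (ε : ℕ → ℝ) (hε : ∀ j, 0 < ε j)
    (hε0 : Filter.Tendsto ε Filter.atTop (nhds 0)) :
    ∃ x : ℕ → X,
      -- `x` is a block basic sequence of `e`:
      (∃ (m : ℕ → ℕ) (a : ℕ → ℝ), StrictMono m ∧
        ∀ j, x j = ∑ i ∈ Finset.Ico (m j) (m (j + 1)), a i • e i) ∧
      -- normalized:
      (∀ j, ‖x j‖ = 1) ∧
      -- the canonical projections `P_j` associated to `(x_j)` satisfy `‖P_j‖ ≤ 1 + ε_j`: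
      ∀ (b : ℕ → ℝ) (j n : ℕ), j ≤ n →
        ‖∑ i ∈ Finset.range j, b i • x i‖ ≤
          (1 + ε j) * ‖∑ i ∈ Finset.range n, b i • x i‖ := by
  classical
  obtain ⟨hne, K, hK⟩ := hbasic
  have he : LinearIndependent ℝ e := basicSeq_linearIndependent e hne K hK
  -- running minimum of ε, capped at 1
  set c : ℕ → ℝ := fun j => Nat.rec (ε 0) (fun j cj => min cj (ε (j+1))) j with hc
  have hc0 : ∀ j, 0 < c j := by
    intro j
    induction j with
    | zero => exact hε 0
    | succ j ih => exact lt_min ih (hε (j+1))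
  have hcle : ∀ j, c j ≤ ε j := by
    intro j
    cases j with
    | zero => exact le_refl _
    | succ j => exact min_le_right _ _
  have hcmono : ∀ j i, j ≤ i → c i ≤ c j := by
    intro j i h
    induction i, h using Nat.le_induction with
    | base => exact le_refl _
    | succ i hi ih => exact le_trans (min_le_left _ _) ih
  set δ : ℕ → ℝ := fun j => min (c j) 1 * (1/2)^(j+2) with hδdef
  have hδpos : ∀ j, 0 < δ j := fun j => mul_pos (lt_min (hc0 j) one_pos) (by positivity)
  set M : ℕ → ℕ := bm e he δ hδpos with hM
  set A : ℕ → ℕ → ℝ := ba e he δ hδpos with hA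
  set x : ℕ → X := bx e he δ hδpos with hx
  have hspec := bx_spec e he δ hδpos
  have hMmono : StrictMono M := strictMono_nat_of_lt_succ fun j => (hspec j).1
  -- global coefficient function
  have hex : ∀ i : ℕ, ∃ j, i < M (j+1) :=
    fun i => ⟨i, lt_of_le_of_lt hMmono.le_apply (hspec i).1⟩
  set aglob : ℕ → ℝ := fun i => A (Nat.find (hex i)) i with haglob
  have hxblocks : ∀ j, x j = ∑ i ∈ Finset.Ico (M j) (M (j+1)), aglob i • e i := by
    intro j
    rw [hx]
    show ∑ i ∈ Finset.Ico (M j) (M (j+1)), A j i • e i = _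
    refine Finset.sum_congr rfl fun i hi => ?_
    obtain ⟨hi1, hi2⟩ := Finset.mem_Ico.1 hi
    have hfind : Nat.find (hex i) = j := by
      rw [Nat.find_eq_iff]
      refine ⟨hi2, fun j' hj' => not_lt.2 ?_⟩
      exact le_trans (hMmono.monotone hj') hi1
    rw [haglob]
    simp only [hfind]
  refine ⟨x, ⟨M, aglob, hMmono, hxblocks⟩, fun j => (hspec j).2.1, ?_⟩
  -- the projection bound
  intro b j n hjn
  -- partial sums lie in the span of earlier blocks
  have hspan : ∀ k, ∑ i ∈ Finset.range k, b i • x i ∈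
      Submodule.span ℝ {z | z ∈ (bstate e he δ hδpos k).2} := by
    intro k
    apply Submodule.sum_mem
    intro i hi
    apply Submodule.smul_mem
    apply Submodule.subset_span
    rw [bstate_snd_eq]
    simp only [Set.mem_setOf_eq, List.mem_map]
    exact ⟨i, List.mem_range.2 (Finset.mem_range.1 hi), rfl⟩
  have key : ‖∑ i ∈ Finset.range j, b i • x i‖ ≤
      (∏ i ∈ Finset.Ico j n, (1 + δ i)) * ‖∑ i ∈ Finset.range n, b i • x i‖ := by
    induction n, hjn using Nat.le_induction with
    | base => simp
    | succ n hn ih =>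
      have hstep := (hspec n).2.2 _ (hspan n) (b n)
      rw [show (∑ i ∈ Finset.range n, b i • x i) + b n • bx e he δ hδpos n =
          ∑ i ∈ Finset.range (n+1), b i • x i from (Finset.sum_range_succ _ n).symm] at hstep
      have hP0 : 0 ≤ ∏ i ∈ Finset.Ico j n, (1 + δ i) :=
        Finset.prod_nonneg fun i _ => by have := (hδpos i); linarith
      calc ‖∑ i ∈ Finset.range j, b i • x i‖
          ≤ (∏ i ∈ Finset.Ico j n, (1 + δ i)) * ‖∑ i ∈ Finset.range n, b i • x i‖ := ih
        _ ≤ (∏ i ∈ Finset.Ico j n, (1 + δ i)) *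
            ((1 + δ n) * ‖∑ i ∈ Finset.range (n+1), b i • x i‖) :=
            mul_le_mul_of_nonneg_left hstep hP0
        _ = (∏ i ∈ Finset.Ico j (n+1), (1 + δ i)) *
            ‖∑ i ∈ Finset.range (n+1), b i • x i‖ := by
            rw [Finset.prod_Ico_succ_top hn]; ring
  -- bound the product by 1 + ε j
  have hsum_le : ∑ i ∈ Finset.Ico j n, δ i ≤ min (c j) 1 * (1/2)^(j+1) := by
    have h1 : ∀ i ∈ Finset.Ico j n, δ i ≤ min (c j) 1 * (1/2)^(i+2) := by
      intro i hi
      have hji : j ≤ i := (Finset.mem_Ico.1 hi).1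
      rw [hδdef]
      apply mul_le_mul_of_nonneg_right _ (by positivity)
      exact min_le_min (hcmono j i hji) (le_refl 1)
    calc ∑ i ∈ Finset.Ico j n, δ i
        ≤ ∑ i ∈ Finset.Ico j n, min (c j) 1 * (1/2)^(i+2) := Finset.sum_le_sum h1
      _ = min (c j) 1 * ∑ i ∈ Finset.Ico j n, ((1:ℝ)/2)^(i+2) := by
          rw [Finset.mul_sum]
      _ ≤ min (c j) 1 * (1/2)^(j+1) :=
          mul_le_mul_of_nonneg_left (geom_tail_le j n) (le_min (hc0 j).le zero_le_one)
  have hhalf : ((1:ℝ)/2)^(j+1) ≤ 1/2 := by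
    calc ((1:ℝ)/2)^(j+1) ≤ (1/2)^1 :=
        pow_le_pow_of_le_one (by norm_num) (by norm_num) (by omega)
      _ = 1/2 := pow_one _
  have hmin1 : min (c j) 1 ≤ 1 := min_le_right _ _
  have hminc : min (c j) 1 ≤ c j := min_le_left _ _
  have hmin0 : 0 ≤ min (c j) 1 := le_min (hc0 j).le zero_le_one
  have hsum_half : ∑ i ∈ Finset.Ico j n, δ i ≤ 1/2 := by
    calc ∑ i ∈ Finset.Ico j n, δ i ≤ min (c j) 1 * (1/2)^(j+1) := hsum_le
      _ ≤ 1 * (1/2) := by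
          apply mul_le_mul hmin1 hhalf (by positivity) zero_le_one
      _ = 1/2 := one_mul _
  have hprod : ∏ i ∈ Finset.Ico j n, (1 + δ i) ≤ 1 + ε j := by
    calc ∏ i ∈ Finset.Ico j n, (1 + δ i)
        ≤ 1 + 2 * ∑ i ∈ Finset.Ico j n, δ i :=
          prod_one_add_le δ (fun i => (hδpos i).le) j n hsum_half
      _ ≤ 1 + ε j := by
          have h2 : 2 * ∑ i ∈ Finset.Ico j n, δ i ≤ 2 * (min (c j) 1 * (1/2)^(j+1)) := by
            linarith [hsum_le]
          have h3 : 2 * (min (c j) 1 * (1/2)^(j+1)) ≤ min (c j) 1 := by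
            nlinarith [hhalf, hmin0]
          have h4 := hcle j
          linarith
  calc ‖∑ i ∈ Finset.range j, b i • x i‖
      ≤ (∏ i ∈ Finset.Ico j n, (1 + δ i)) * ‖∑ i ∈ Finset.range n, b i • x i‖ := key
    _ ≤ (1 + ε j) * ‖∑ i ∈ Finset.range n, b i • x i‖ :=
        mul_le_mul_of_nonneg_right hprod (norm_nonneg _)
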